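/- (Exact second-moment identities from Lemma 1, entries for û₁ and û₂.) Under the noisy network model with two independent replicates, set û₁ = Ȳ = N^{-1} Σ_{i<j} Y_{i,j}, û₂ = (2N)^{-1} Σ_{i<j} |Y_{i,j,*} − Y_{i,j}|, u₁ = E(û₁), u₂ = E(û₂), κ₁ = α(1−α), κ₂ = β(1−β). Then N·E{(û₁−u₁)²} = δκ₂ + (1−δ)κ₁, N·E{(û₂−u₂)²} = δκ₂(1/2 − κ₂) + (1−δ)κ₁(1/2 − κ₁), and N·E{(û₁−u₁)(û₂−u₂)} = δκ₂(β − 1/2) + (1−δ)κ₁(1/2 − α). -/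

import Mathlib

open MeasureTheory ProbabilityTheory Finset

/-- Index set of unordered vertex pairs, encoded as ordered pairs `(i, j)` with `i < j`. -/
abbrev EdgeIdx (p : ℕ) := {q : Fin p × Fin p // q.1 < q.2}

/-- The Bernoulli mass function on `{0,1}`: mass `q` at `1` and `1 − q` at `0`. -/
noncomputable def bernMass (q a : ℝ) : ℝ := if a = 1 then q else 1 - q

lemma int_of_bdd {Ω : Type*} [MeasurableSpace Ω] {μ : Measure Ω} [IsFiniteMeasure μ]
    {f : Ω → ℝ} (hm : AEStronglyMeasurable f μ) {C : ℝ} (h : ∀ ω, |f ω| ≤ C) :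
    Integrable f μ :=
  (integrable_const C).mono' hm (Filter.Eventually.of_forall h)

lemma expand_sum {Ω : Type*} [MeasurableSpace Ω] {μ : Measure Ω} {ι : Type*} [Fintype ι]
    (f g : ι → Ω → ℝ)
    (hint : ∀ e e' : ι, Integrable (fun ω => f e ω * g e' ω) μ)
    (hzero : ∀ e e' : ι, e ≠ e' → ∫ ω, f e ω * g e' ω ∂μ = 0) :
    ∫ ω, (∑ e, f e ω) * (∑ e, g e ω) ∂μ = ∑ e, ∫ ω, f e ω * g e ω ∂μ := by
  have h1 : ∀ ω : Ω, (∑ e, f e ω) * (∑ e, g e ω) = ∑ e, ∑ e', f e ω * g e' ω :=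
    fun ω => Finset.sum_mul_sum _ _ _ _
  simp_rw [h1]
  rw [integral_finset_sum _ (fun e _ => integrable_finset_sum _ (fun e' _ => hint e e'))]
  refine Finset.sum_congr rfl fun e _ => ?_
  rw [integral_finset_sum _ (fun e' _ => hint e e')]
  exact Finset.sum_eq_single e (fun e' _ h => hzero e e' (Ne.symm h)) (by simp)


lemma card_lt_filter (p : ℕ) :
    2 * ((univ : Finset (Fin p × Fin p)).filter (fun q => q.1 < q.2)).card = p * p - p := by
  classical
  have hst : ((univ : Finset (Fin p × Fin p)).filter (fun q => q.1 < q.2)).card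
      = ((univ : Finset (Fin p × Fin p)).filter (fun q => q.2 < q.1)).card := by
    refine Finset.card_bij (fun q _ => q.swap) ?_ ?_ ?_
    · intro q hq
      simp only [mem_filter, mem_univ, true_and, Prod.fst_swap, Prod.snd_swap] at hq ⊢
      exact hq
    · intro a _ b _ h; exact Prod.swap_injective h
    · intro b hb
      refine ⟨b.swap, ?_, by simp⟩
      simp only [mem_filter, mem_univ, true_and, Prod.fst_swap, Prod.snd_swap] at hb ⊢
      exact hb
  have hdisj : Disjoint ((univ : Finset (Fin p × Fin p)).filter (fun q => q.1 < q.2))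
      ((univ : Finset (Fin p × Fin p)).filter (fun q => q.2 < q.1)) := by
    rw [Finset.disjoint_filter]
    intro q _ h1 h2
    exact absurd (h1.trans h2) (lt_irrefl _)
  have hunion : (univ : Finset (Fin p × Fin p)).filter (fun q => q.1 < q.2)
      ∪ (univ : Finset (Fin p × Fin p)).filter (fun q => q.2 < q.1)
      = (univ : Finset (Fin p)).offDiag := by
    ext q
    simp only [mem_union, mem_filter, mem_univ, true_and, Finset.mem_offDiag]
    exact lt_or_lt_iff_ne
  have hc := card_union_of_disjoint hdisj
  rw [hunion, Finset.offDiag_card] at hc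
  simp only [Finset.card_univ, Fintype.card_fin] at hc
  omega

lemma bern_moment {Ω : Type*} [MeasurableSpace Ω] (μ : Measure Ω) [IsProbabilityMeasure μ]
    {X Z : Ω → ℝ} (hX : Measurable X) (hZ : Measurable Z)
    (hX01 : ∀ ω, X ω = 0 ∨ X ω = 1) (hZ01 : ∀ ω, Z ω = 0 ∨ Z ω = 1)
    {q : ℝ} (hq0 : 0 ≤ q) (hq1 : q ≤ 1)
    (hj : ∀ a b : ℝ, (a = 0 ∨ a = 1) → (b = 0 ∨ b = 1) →
      μ {ω | X ω = a ∧ Z ω = b} = ENNReal.ofReal (bernMass q a * bernMass q b))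
    (c₀ c₁ c₂ c₃ : ℝ) :
    ∫ ω, c₀ + c₁ * X ω + c₂ * Z ω + c₃ * (X ω * Z ω) ∂μ
      = c₀ + c₁ * q + c₂ * q + c₃ * q ^ 2 := by
  have hS : ∀ a b : ℝ, MeasurableSet {ω | X ω = a ∧ Z ω = b} := fun a b =>
    (hX (measurableSet_singleton a)).inter (hZ (measurableSet_singleton b))
  have hb1 : bernMass q 1 = q := by simp [bernMass]
  have hb0 : bernMass q 0 = 1 - q := by norm_num [bernMass]
  have m11 : (μ {ω | X ω = 1 ∧ Z ω = 1}).toReal = q * q := by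
    rw [hj 1 1 (Or.inr rfl) (Or.inr rfl), hb1, ENNReal.toReal_ofReal (by positivity)]
  have m10 : (μ {ω | X ω = 1 ∧ Z ω = 0}).toReal = q * (1 - q) := by
    rw [hj 1 0 (Or.inr rfl) (Or.inl rfl), hb1, hb0,
      ENNReal.toReal_ofReal (mul_nonneg hq0 (by linarith))]
  have m01 : (μ {ω | X ω = 0 ∧ Z ω = 1}).toReal = (1 - q) * q := by
    rw [hj 0 1 (Or.inl rfl) (Or.inr rfl), hb1, hb0,
      ENNReal.toReal_ofReal (mul_nonneg (by linarith) hq0)]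
  have iInd : ∀ a b : ℝ, Integrable ({ω | X ω = a ∧ Z ω = b}.indicator fun _ => (1:ℝ)) μ :=
    fun a b => (integrable_const (1:ℝ)).indicator (hS a b)
  have hEXZ : ∫ ω, X ω * Z ω ∂μ = q * q := by
    have h : (fun ω => X ω * Z ω)
        = fun ω => {ω | X ω = 1 ∧ Z ω = 1}.indicator (fun _ => (1:ℝ)) ω := by
      funext ω
      rcases hX01 ω with h1 | h1 <;> rcases hZ01 ω with h2 | h2 <;>
        simp [Set.indicator_apply, h1, h2]
    rw [h, integral_indicator_const (1:ℝ) (hS 1 1), smul_eq_mul, mul_one, measureReal_def, m11]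
  have hEX : ∫ ω, X ω ∂μ = q := by
    have h : X = fun ω => {ω | X ω = 1 ∧ Z ω = 0}.indicator (fun _ => (1:ℝ)) ω
        + {ω | X ω = 1 ∧ Z ω = 1}.indicator (fun _ => (1:ℝ)) ω := by
      funext ω
      rcases hX01 ω with h1 | h1 <;> rcases hZ01 ω with h2 | h2 <;>
        simp [Set.indicator_apply, h1, h2]
    calc ∫ ω, X ω ∂μ = ∫ ω, ({ω | X ω = 1 ∧ Z ω = 0}.indicator (fun _ => (1:ℝ)) ω
        + {ω | X ω = 1 ∧ Z ω = 1}.indicator (fun _ => (1:ℝ)) ω) ∂μ := by rw [← h]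
    _ = q := by
        rw [integral_add (iInd 1 0) (iInd 1 1), integral_indicator_const (1:ℝ) (hS 1 0),
          integral_indicator_const (1:ℝ) (hS 1 1), smul_eq_mul, smul_eq_mul, mul_one, mul_one,
          measureReal_def, measureReal_def, m10, m11]
        ring
  have hEZ : ∫ ω, Z ω ∂μ = q := by
    have h : Z = fun ω => {ω | X ω = 0 ∧ Z ω = 1}.indicator (fun _ => (1:ℝ)) ω
        + {ω | X ω = 1 ∧ Z ω = 1}.indicator (fun _ => (1:ℝ)) ω := by
      funext ω
      rcases hX01 ω with h1 | h1 <;> rcases hZ01 ω with h2 | h2 <;>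
        simp [Set.indicator_apply, h1, h2]
    calc ∫ ω, Z ω ∂μ = ∫ ω, ({ω | X ω = 0 ∧ Z ω = 1}.indicator (fun _ => (1:ℝ)) ω
        + {ω | X ω = 1 ∧ Z ω = 1}.indicator (fun _ => (1:ℝ)) ω) ∂μ := by rw [← h]
    _ = q := by
        rw [integral_add (iInd 0 1) (iInd 1 1), integral_indicator_const (1:ℝ) (hS 0 1),
          integral_indicator_const (1:ℝ) (hS 1 1), smul_eq_mul, smul_eq_mul, mul_one, mul_one,
          measureReal_def, measureReal_def, m01, m11]
        ring
  have bX : ∀ ω, |X ω| ≤ 1 := fun ω => by rcases hX01 ω with h | h <;> rw [h] <;> norm_num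
  have bZ : ∀ ω, |Z ω| ≤ 1 := fun ω => by rcases hZ01 ω with h | h <;> rw [h] <;> norm_num
  have iX : Integrable X μ := int_of_bdd hX.aestronglyMeasurable bX
  have iZ : Integrable Z μ := int_of_bdd hZ.aestronglyMeasurable bZ
  have iXZ : Integrable (fun ω => X ω * Z ω) μ :=
    int_of_bdd (hX.mul hZ).aestronglyMeasurable (C := 1) fun ω => by
      rw [abs_mul]
      exact mul_le_one₀ (bX ω) (abs_nonneg _) (bZ ω)
  have Ia : Integrable (fun ω => c₀ + c₁ * X ω) μ :=
    (integrable_const c₀).add (iX.const_mul c₁)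
  have I0 : Integrable (fun ω => c₀ + c₁ * X ω + c₂ * Z ω) μ := Ia.add (iZ.const_mul c₂)
  rw [integral_add I0 (iXZ.const_mul c₃), integral_add Ia (iZ.const_mul c₂),
    integral_add (integrable_const c₀) (iX.const_mul c₁),
    integral_const, integral_const_mul, integral_const_mul, integral_const_mul,
    hEX, hEZ, hEXZ]
  simp only [measureReal_def, measure_univ, ENNReal.toReal_one, one_smul]
  ring


set_option maxHeartbeats 2000000 in
/-- Exact second-moment identities (Lemma 1, entries for `û₁` and `û₂`): under the
noisy network model with two independent replicates, with `û₁ = N⁻¹ ∑_{i<j} Yᵢⱼ`,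
`û₂ = (2N)⁻¹ ∑_{i<j} |Y*ᵢⱼ − Yᵢⱼ|`, `u₁ = E(û₁)`, `u₂ = E(û₂)`, `κ₁ = α(1−α)`,
`κ₂ = β(1−β)`, one has `N·E{(û₁−u₁)²} = δκ₂ + (1−δ)κ₁`,
`N·E{(û₂−u₂)²} = δκ₂(1/2−κ₂) + (1−δ)κ₁(1/2−κ₁)`, and
`N·E{(û₁−u₁)(û₂−u₂)} = δκ₂(β−1/2) + (1−δ)κ₁(1/2−α)`. -/
theorem second_moment_identities_u1_u2
    {Ω : Type*} [MeasurableSpace Ω] (μ : Measure Ω) [IsProbabilityMeasure μ]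
    (p : ℕ) (hp : 2 ≤ p)
    (A : Fin p → Fin p → ℝ)
    (hA01 : ∀ i j, A i j = 0 ∨ A i j = 1)
    (hAsym : ∀ i j, A i j = A j i) (hAdiag : ∀ i, A i i = 0)
    (α β : ℝ) (hα0 : 0 ≤ α) (hα1 : α ≤ 1) (hβ0 : 0 ≤ β) (hβ1 : β ≤ 1)
    (hαβ : α + β ≤ 1)
    (Y Ystar : Fin p → Fin p → Ω → ℝ)
    (hYmeas : ∀ i j, Measurable (Y i j)) (hYstarmeas : ∀ i j, Measurable (Ystar i j))
    (hY01 : ∀ i j ω, Y i j ω = 0 ∨ Y i j ω = 1)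
    (hYstar01 : ∀ i j ω, Ystar i j ω = 0 ∨ Ystar i j ω = 1)
    -- within each pair `i < j`, the two replicates are i.i.d. Bernoulli with
    -- success probability `1−β` if `Aᵢⱼ = 1` and `α` if `Aᵢⱼ = 0`
    (hjoint : ∀ i j, i < j → ∀ a b : ℝ, (a = 0 ∨ a = 1) → (b = 0 ∨ b = 1) →
      μ {ω | Y i j ω = a ∧ Ystar i j ω = b} =
        ENNReal.ofReal (bernMass (if A i j = 1 then 1 - β else α) a *
          bernMass (if A i j = 1 then 1 - β else α) b))
    -- the pairs `(Yᵢⱼ, Y*ᵢⱼ)` are independent across the unordered vertex pairs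
    (hindep : iIndepFun (m := fun _ : EdgeIdx p => (inferInstance : MeasurableSpace (ℝ × ℝ)))
      (fun e ω => (Y e.1.1 e.1.2 ω, Ystar e.1.1 e.1.2 ω)) μ)
    (N δ κ₁ κ₂ : ℝ)
    (hN : N = (p : ℝ) * ((p : ℝ) - 1) / 2)
    (hδ : δ = N⁻¹ * ∑ q ∈ univ.filter (fun q : Fin p × Fin p => q.1 < q.2), A q.1 q.2)
    (hκ₁ : κ₁ = α * (1 - α)) (hκ₂ : κ₂ = β * (1 - β))
    (u₁ u₂ : ℝ)
    (hu₁ : u₁ = ∫ ω, N⁻¹ * ∑ q ∈ univ.filter (fun q : Fin p × Fin p => q.1 < q.2),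
      Y q.1 q.2 ω ∂μ)
    (hu₂ : u₂ = ∫ ω, (2 * N)⁻¹ * ∑ q ∈ univ.filter (fun q : Fin p × Fin p => q.1 < q.2),
      |Ystar q.1 q.2 ω - Y q.1 q.2 ω| ∂μ) :
    N * ∫ ω, ((N⁻¹ * ∑ q ∈ univ.filter (fun q : Fin p × Fin p => q.1 < q.2),
          Y q.1 q.2 ω) - u₁) ^ 2 ∂μ
        = δ * κ₂ + (1 - δ) * κ₁ ∧
    N * ∫ ω, ((2 * N)⁻¹ * ∑ q ∈ univ.filter (fun q : Fin p × Fin p => q.1 < q.2),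
          |Ystar q.1 q.2 ω - Y q.1 q.2 ω| - u₂) ^ 2 ∂μ
        = δ * κ₂ * (1 / 2 - κ₂) + (1 - δ) * κ₁ * (1 / 2 - κ₁) ∧
    N * ∫ ω, ((N⁻¹ * ∑ q ∈ univ.filter (fun q : Fin p × Fin p => q.1 < q.2),
            Y q.1 q.2 ω) - u₁) *
          ((2 * N)⁻¹ * ∑ q ∈ univ.filter (fun q : Fin p × Fin p => q.1 < q.2),
            |Ystar q.1 q.2 ω - Y q.1 q.2 ω| - u₂) ∂μ
        = δ * κ₂ * (β - 1 / 2) + (1 - δ) * κ₁ * (1 / 2 - α) := by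
  classical
  set E := univ.filter (fun q : Fin p × Fin p => q.1 < q.2) with hE
  have hmemE : ∀ q : Fin p × Fin p, q ∈ E ↔ q.1 < q.2 := by
    intro q; rw [hE]; simp
  have hp2 : (2:ℝ) ≤ (p:ℝ) := by exact_mod_cast hp
  have hN1 : (1:ℝ) ≤ N := by rw [hN]; nlinarith
  have hN0 : N ≠ 0 := by linarith
  have h01 : ¬(0:ℝ) = 1 := by norm_num
  have hscal1 : ∀ a b : ℝ,
      N * (N⁻¹ * N⁻¹ * ((N * δ) * a + (N - N * δ) * b)) = δ * a + (1 - δ) * b := by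
    intro a b; field_simp
  have hscal2 : ∀ a b : ℝ,
      N * ((2 * N)⁻¹ * (2 * N)⁻¹ * ((N * δ) * (2 * a * (1 - 2 * a))
        + (N - N * δ) * (2 * b * (1 - 2 * b))))
      = δ * a * (1 / 2 - a) + (1 - δ) * b * (1 / 2 - b) := by
    intro a b; field_simp
  have hscal3 : ∀ a b : ℝ,
      N * (N⁻¹ * (2 * N)⁻¹ * ((N * δ) * (a * (2 * β - 1))
        + (N - N * δ) * (b * (1 - 2 * α))))
      = δ * a * (β - 1 / 2) + (1 - δ) * b * (1 / 2 - α) := by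
    intro a b; field_simp
  -- cardinality
  have hcard2 : 2 * E.card = p * p - p := by rw [hE]; exact card_lt_filter p
  have hCN : ((E.card : ℕ) : ℝ) = N := by
    have hple : p ≤ p * p := Nat.le_mul_of_pos_left p (by omega)
    have h2 : ((2 * E.card : ℕ) : ℝ) = ((p * p - p : ℕ) : ℝ) := by rw [hcard2]
    rw [Nat.cast_sub hple] at h2
    push_cast at h2
    rw [hN]; linarith
  -- local definitions
  obtain ⟨qv, hqv⟩ : ∃ qv : EdgeIdx p → ℝ,
      qv = fun e => if A e.1.1 e.1.2 = 1 then 1 - β else α := ⟨_, rfl⟩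
  obtain ⟨rv, hrv⟩ : ∃ rv : EdgeIdx p → ℝ, rv = fun e => 2 * qv e * (1 - qv e) := ⟨_, rfl⟩
  obtain ⟨f, hf⟩ : ∃ f : EdgeIdx p → Ω → ℝ,
      f = fun e ω => Y e.1.1 e.1.2 ω - qv e := ⟨_, rfl⟩
  obtain ⟨g, hg⟩ : ∃ g : EdgeIdx p → Ω → ℝ,
      g = fun e ω => |Ystar e.1.1 e.1.2 ω - Y e.1.1 e.1.2 ω| - rv e := ⟨_, rfl⟩
  have hq0 : ∀ e, 0 ≤ qv e := by intro e; simp only [hqv]; split <;> linarith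
  have hq1 : ∀ e, qv e ≤ 1 := by intro e; simp only [hqv]; split <;> linarith
  have hr0 : ∀ e, 0 ≤ rv e := by
    intro e; have := hq0 e; have := hq1 e; simp only [hrv]; nlinarith
  have hr2 : ∀ e, rv e ≤ 2 := by
    intro e; have := hq0 e; have := hq1 e; simp only [hrv]; nlinarith
  -- moments
  have moment : ∀ e : EdgeIdx p, ∀ c₀ c₁ c₂ c₃ : ℝ,
      ∫ ω, c₀ + c₁ * Y e.1.1 e.1.2 ω + c₂ * Ystar e.1.1 e.1.2 ω
        + c₃ * (Y e.1.1 e.1.2 ω * Ystar e.1.1 e.1.2 ω) ∂μ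
        = c₀ + c₁ * qv e + c₂ * qv e + c₃ * qv e ^ 2 := by
    intro e c₀ c₁ c₂ c₃
    simp only [hqv]
    exact bern_moment μ (hYmeas _ _) (hYstarmeas _ _) (hY01 _ _) (hYstar01 _ _)
      (by split <;> linarith) (by split <;> linarith) (hjoint _ _ e.2) c₀ c₁ c₂ c₃
  have Zid : ∀ (i j : Fin p) (ω : Ω), |Ystar i j ω - Y i j ω|
      = Y i j ω + Ystar i j ω - 2 * (Y i j ω * Ystar i j ω) := by
    intro i j ω
    rcases hY01 i j ω with h | h <;> rcases hYstar01 i j ω with h' | h' <;>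
      rw [h, h'] <;> norm_num
  -- per-edge first moments
  have hEY : ∀ e : EdgeIdx p, ∫ ω, Y e.1.1 e.1.2 ω ∂μ = qv e := by
    intro e; simpa using moment e 0 1 0 0
  have hEZe : ∀ e : EdgeIdx p, ∫ ω, |Ystar e.1.1 e.1.2 ω - Y e.1.1 e.1.2 ω| ∂μ = rv e := by
    intro e
    calc ∫ ω, |Ystar e.1.1 e.1.2 ω - Y e.1.1 e.1.2 ω| ∂μ
        = ∫ ω, 0 + 1 * Y e.1.1 e.1.2 ω + 1 * Ystar e.1.1 e.1.2 ω
            + (-2) * (Y e.1.1 e.1.2 ω * Ystar e.1.1 e.1.2 ω) ∂μ := by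
          refine integral_congr_ae (Filter.Eventually.of_forall fun ω => ?_)
          dsimp only
          rw [Zid]; ring
      _ = rv e := by rw [moment e 0 1 1 (-2)]; simp only [hrv]; ring
  have hf0 : ∀ e : EdgeIdx p, ∫ ω, f e ω ∂μ = 0 := by
    intro e
    calc ∫ ω, f e ω ∂μ
        = ∫ ω, (-qv e) + 1 * Y e.1.1 e.1.2 ω + 0 * Ystar e.1.1 e.1.2 ω
            + 0 * (Y e.1.1 e.1.2 ω * Ystar e.1.1 e.1.2 ω) ∂μ := by
          refine integral_congr_ae (Filter.Eventually.of_forall fun ω => ?_)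
          dsimp only
          simp only [hf]; ring
      _ = 0 := by rw [moment e (-qv e) 1 0 0]; ring
  have hg0 : ∀ e : EdgeIdx p, ∫ ω, g e ω ∂μ = 0 := by
    intro e
    calc ∫ ω, g e ω ∂μ
        = ∫ ω, (-rv e) + 1 * Y e.1.1 e.1.2 ω + 1 * Ystar e.1.1 e.1.2 ω
            + (-2) * (Y e.1.1 e.1.2 ω * Ystar e.1.1 e.1.2 ω) ∂μ := by
          refine integral_congr_ae (Filter.Eventually.of_forall fun ω => ?_)
          dsimp only
          simp only [hg]; rw [Zid]; ring
      _ = 0 := by rw [moment e (-rv e) 1 1 (-2)]; simp only [hrv]; ring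
  -- per-edge second moments
  have hd1 : ∀ e : EdgeIdx p, ∫ ω, f e ω * f e ω ∂μ = qv e * (1 - qv e) := by
    intro e
    calc ∫ ω, f e ω * f e ω ∂μ
        = ∫ ω, (qv e ^ 2) + (1 - 2 * qv e) * Y e.1.1 e.1.2 ω + 0 * Ystar e.1.1 e.1.2 ω
            + 0 * (Y e.1.1 e.1.2 ω * Ystar e.1.1 e.1.2 ω) ∂μ := by
          refine integral_congr_ae (Filter.Eventually.of_forall fun ω => ?_)
          dsimp only
          simp only [hf]
          rcases hY01 e.1.1 e.1.2 ω with h | h <;> rw [h] <;> ring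
      _ = qv e * (1 - qv e) := by rw [moment e _ _ _ _]; ring
  have hd2 : ∀ e : EdgeIdx p, ∫ ω, g e ω * g e ω ∂μ = rv e * (1 - rv e) := by
    intro e
    calc ∫ ω, g e ω * g e ω ∂μ
        = ∫ ω, (rv e ^ 2) + (1 - 2 * rv e) * Y e.1.1 e.1.2 ω
            + (1 - 2 * rv e) * Ystar e.1.1 e.1.2 ω
            + (-2 * (1 - 2 * rv e)) * (Y e.1.1 e.1.2 ω * Ystar e.1.1 e.1.2 ω) ∂μ := by
          refine integral_congr_ae (Filter.Eventually.of_forall fun ω => ?_)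
          dsimp only
          simp only [hg]
          rcases hY01 e.1.1 e.1.2 ω with h | h <;> rcases hYstar01 e.1.1 e.1.2 ω with h' | h' <;>
            rw [h, h'] <;> norm_num <;> ring
      _ = rv e * (1 - rv e) := by rw [moment e _ _ _ _]; simp only [hrv]; ring
  have hd12 : ∀ e : EdgeIdx p, ∫ ω, f e ω * g e ω ∂μ
      = qv e * (1 - qv e) * (1 - 2 * qv e) := by
    intro e
    calc ∫ ω, f e ω * g e ω ∂μ
        = ∫ ω, (qv e * rv e) + (1 - rv e - qv e) * Y e.1.1 e.1.2 ω
            + (-qv e) * Ystar e.1.1 e.1.2 ω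
            + (2 * qv e - 1) * (Y e.1.1 e.1.2 ω * Ystar e.1.1 e.1.2 ω) ∂μ := by
          refine integral_congr_ae (Filter.Eventually.of_forall fun ω => ?_)
          dsimp only
          simp only [hf, hg]
          rcases hY01 e.1.1 e.1.2 ω with h | h <;> rcases hYstar01 e.1.1 e.1.2 ω with h' | h' <;>
            rw [h, h'] <;> norm_num <;> ring
      _ = qv e * (1 - qv e) * (1 - 2 * qv e) := by
          rw [moment e _ _ _ _]; simp only [hrv]; ring
  -- measurability / bounds / integrability
  have hmf : ∀ e : EdgeIdx p, Measurable (f e) := by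
    intro e; simp only [hf]; exact (hYmeas _ _).sub measurable_const
  have hmg : ∀ e : EdgeIdx p, Measurable (g e) := by
    intro e; simp only [hg]
    exact (((hYstarmeas _ _).sub (hYmeas _ _)).abs).sub measurable_const
  have hbf : ∀ (e : EdgeIdx p) ω, |f e ω| ≤ 2 := by
    intro e ω
    have h0 := hq0 e; have h1 := hq1 e
    simp only [hf]
    rcases hY01 e.1.1 e.1.2 ω with h | h <;> rw [h, abs_le] <;> constructor <;> linarith
  have hZbd : ∀ (i j : Fin p) ω, |Ystar i j ω - Y i j ω| ≤ 1 := by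
    intro i j ω
    rcases hY01 i j ω with h | h <;> rcases hYstar01 i j ω with h' | h' <;>
      rw [h, h'] <;> norm_num
  have hbg : ∀ (e : EdgeIdx p) ω, |g e ω| ≤ 2 := by
    intro e ω
    have h0 := hr0 e; have h1 := hr2 e
    have h2 := hZbd e.1.1 e.1.2 ω
    have h3 : (0:ℝ) ≤ |Ystar e.1.1 e.1.2 ω - Y e.1.1 e.1.2 ω| := abs_nonneg _
    simp only [hg]
    rw [abs_le]; constructor <;> linarith
  have hintpair : ∀ (u v : Ω → ℝ), Measurable u → Measurable v →
      (∀ ω, |u ω| ≤ 2) → (∀ ω, |v ω| ≤ 2) → Integrable (fun ω => u ω * v ω) μ := by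
    intro u v hu hv hbu hbv
    refine int_of_bdd (hu.mul hv).aestronglyMeasurable (C := 4) fun ω => ?_
    rw [abs_mul]
    have := mul_le_mul (hbu ω) (hbv ω) (abs_nonneg _) (by norm_num : (0:ℝ) ≤ 2)
    linarith
  have hintff : ∀ e e' : EdgeIdx p, Integrable (fun ω => f e ω * f e' ω) μ :=
    fun e e' => hintpair _ _ (hmf e) (hmf e') (hbf e) (hbf e')
  have hintgg : ∀ e e' : EdgeIdx p, Integrable (fun ω => g e ω * g e' ω) μ :=
    fun e e' => hintpair _ _ (hmg e) (hmg e') (hbg e) (hbg e')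
  have hintfg : ∀ e e' : EdgeIdx p, Integrable (fun ω => f e ω * g e' ω) μ :=
    fun e e' => hintpair _ _ (hmf e) (hmg e') (hbf e) (hbg e')
  -- independence of distinct edges
  have hcomp : ∀ (e e' : EdgeIdx p), e ≠ e' → ∀ (F G : ℝ × ℝ → ℝ),
      Measurable F → Measurable G →
      IndepFun (fun ω => F (Y e.1.1 e.1.2 ω, Ystar e.1.1 e.1.2 ω))
        (fun ω => G (Y e'.1.1 e'.1.2 ω, Ystar e'.1.1 e'.1.2 ω)) μ :=
    fun e e' hne F G hF hG => (hindep.indepFun hne).comp hF hG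
  have hindf : ∀ e e' : EdgeIdx p, e ≠ e' → IndepFun (f e) (f e') μ := by
    intro e e' hne
    have h := hcomp e e' hne (fun v => v.1 - qv e) (fun v => v.1 - qv e')
      (measurable_fst.sub measurable_const) (measurable_fst.sub measurable_const)
    rw [hf]; exact h
  have hindg : ∀ e e' : EdgeIdx p, e ≠ e' → IndepFun (g e) (g e') μ := by
    intro e e' hne
    have h := hcomp e e' hne (fun v => |v.2 - v.1| - rv e) (fun v => |v.2 - v.1| - rv e')
      (((measurable_snd.sub measurable_fst).abs).sub measurable_const)
      (((measurable_snd.sub measurable_fst).abs).sub measurable_const)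
    rw [hg]; exact h
  have hindfg : ∀ e e' : EdgeIdx p, e ≠ e' → IndepFun (f e) (g e') μ := by
    intro e e' hne
    have h := hcomp e e' hne (fun v => v.1 - qv e) (fun v => |v.2 - v.1| - rv e')
      (measurable_fst.sub measurable_const)
      (((measurable_snd.sub measurable_fst).abs).sub measurable_const)
    rw [hf, hg]; exact h
  have hzff : ∀ e e' : EdgeIdx p, e ≠ e' → ∫ ω, f e ω * f e' ω ∂μ = 0 := by
    intro e e' hne
    rw [(hindf e e' hne).integral_fun_mul_eq_mul_integral (hmf e).aestronglyMeasurable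
      (hmf e').aestronglyMeasurable, hf0, zero_mul]
  have hzgg : ∀ e e' : EdgeIdx p, e ≠ e' → ∫ ω, g e ω * g e' ω ∂μ = 0 := by
    intro e e' hne
    rw [(hindg e e' hne).integral_fun_mul_eq_mul_integral (hmg e).aestronglyMeasurable
      (hmg e').aestronglyMeasurable, hg0, zero_mul]
  have hzfg : ∀ e e' : EdgeIdx p, e ≠ e' → ∫ ω, f e ω * g e' ω ∂μ = 0 := by
    intro e e' hne
    rw [(hindfg e e' hne).integral_fun_mul_eq_mul_integral (hmf e).aestronglyMeasurable
      (hmg e').aestronglyMeasurable, hf0, zero_mul]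
  -- subtype sums
  have hsum_subtype : ∀ (F : Fin p × Fin p → ℝ), ∑ q ∈ E, F q = ∑ e : EdgeIdx p, F e.1 :=
    fun F => Finset.sum_subtype E hmemE F
  -- means
  have hintY : ∀ i j : Fin p, Integrable (Y i j) μ := by
    intro i j
    refine int_of_bdd (hYmeas i j).aestronglyMeasurable (C := 1) fun ω => ?_
    rcases hY01 i j ω with h | h <;> rw [h] <;> norm_num
  have hintZ : ∀ i j : Fin p, Integrable (fun ω => |Ystar i j ω - Y i j ω|) μ := by
    intro i j
    refine int_of_bdd (((hYstarmeas i j).sub (hYmeas i j)).abs).aestronglyMeasurable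
      (C := 1) fun ω => ?_
    rw [abs_abs]; exact hZbd i j ω
  have hu₁' : u₁ = N⁻¹ * ∑ e : EdgeIdx p, qv e := by
    rw [hu₁, integral_const_mul, integral_finset_sum E (fun q _ => hintY q.1 q.2),
      hsum_subtype (fun q => ∫ ω, Y q.1 q.2 ω ∂μ)]
    congr 1
    exact Finset.sum_congr rfl fun e _ => hEY e
  have hu₂' : u₂ = (2 * N)⁻¹ * ∑ e : EdgeIdx p, rv e := by
    rw [hu₂, integral_const_mul, integral_finset_sum E (fun q _ => hintZ q.1 q.2),
      hsum_subtype (fun q => ∫ ω, |Ystar q.1 q.2 ω - Y q.1 q.2 ω| ∂μ)]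
    congr 1
    exact Finset.sum_congr rfl fun e _ => hEZe e
  -- splitting sums according to A
  have hSA : ∑ q ∈ E, A q.1 q.2 = N * δ := by
    rw [hδ, ← mul_assoc, mul_inv_cancel₀ hN0, one_mul]
  have hcardE : (Fintype.card (EdgeIdx p) : ℝ) = N := by
    rw [Fintype.card_subtype]; exact_mod_cast hCN
  have hsplit : ∀ (V : EdgeIdx p → ℝ) (x y : ℝ),
      (∀ e : EdgeIdx p, V e = A e.1.1 e.1.2 * x + (1 - A e.1.1 e.1.2) * y) →
      ∑ e : EdgeIdx p, V e = (N * δ) * x + (N - N * δ) * y := by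
    intro V x y hV
    have hA' : ∑ e : EdgeIdx p, A e.1.1 e.1.2 = N * δ := by
      rw [← hsum_subtype (fun q => A q.1 q.2)]; exact hSA
    have h1 : ∑ _e : EdgeIdx p, (1:ℝ) = N := by
      rw [Finset.sum_const, Finset.card_univ, nsmul_eq_mul, mul_one]; exact hcardE
    calc ∑ e : EdgeIdx p, V e
        = ∑ e : EdgeIdx p, (A e.1.1 e.1.2 * x + (1 - A e.1.1 e.1.2) * y) :=
          Finset.sum_congr rfl fun e _ => hV e
      _ = (∑ e : EdgeIdx p, A e.1.1 e.1.2) * x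
          + ((∑ _e : EdgeIdx p, (1:ℝ)) - ∑ e : EdgeIdx p, A e.1.1 e.1.2) * y := by
          rw [Finset.sum_add_distrib, ← Finset.sum_mul, ← Finset.sum_mul,
            Finset.sum_sub_distrib]
      _ = (N * δ) * x + (N - N * δ) * y := by rw [hA', h1]
  -- per-edge values in terms of A
  have hv1 : ∀ e : EdgeIdx p, qv e * (1 - qv e)
      = A e.1.1 e.1.2 * κ₂ + (1 - A e.1.1 e.1.2) * κ₁ := by
    intro e
    rcases hA01 e.1.1 e.1.2 with h | h
    · simp only [hqv, h]; rw [if_neg h01, hκ₁]; ring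
    · simp only [hqv, h]; simp only [if_true]; rw [hκ₂]; ring
  have hv2 : ∀ e : EdgeIdx p, rv e * (1 - rv e)
      = A e.1.1 e.1.2 * (2 * κ₂ * (1 - 2 * κ₂)) + (1 - A e.1.1 e.1.2) * (2 * κ₁ * (1 - 2 * κ₁)) := by
    intro e
    rcases hA01 e.1.1 e.1.2 with h | h
    · simp only [hrv, hqv, h]; rw [if_neg h01, hκ₁]; ring
    · simp only [hrv, hqv, h]; simp only [if_true]; rw [hκ₂]; ring
  have hv12 : ∀ e : EdgeIdx p, qv e * (1 - qv e) * (1 - 2 * qv e)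
      = A e.1.1 e.1.2 * (κ₂ * (2 * β - 1)) + (1 - A e.1.1 e.1.2) * (κ₁ * (1 - 2 * α)) := by
    intro e
    rcases hA01 e.1.1 e.1.2 with h | h
    · simp only [hqv, h]; rw [if_neg h01, hκ₁]; ring
    · simp only [hqv, h]; simp only [if_true]; rw [hκ₂]; ring
  have hsum1 : ∑ e : EdgeIdx p, ∫ ω, f e ω * f e ω ∂μ = (N * δ) * κ₂ + (N - N * δ) * κ₁ := by
    rw [Finset.sum_congr rfl fun e _ => hd1 e]
    exact hsplit _ _ _ hv1
  have hsum2 : ∑ e : EdgeIdx p, ∫ ω, g e ω * g e ω ∂μ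
      = (N * δ) * (2 * κ₂ * (1 - 2 * κ₂)) + (N - N * δ) * (2 * κ₁ * (1 - 2 * κ₁)) := by
    rw [Finset.sum_congr rfl fun e _ => hd2 e]
    exact hsplit _ _ _ hv2
  have hsum12 : ∑ e : EdgeIdx p, ∫ ω, f e ω * g e ω ∂μ
      = (N * δ) * (κ₂ * (2 * β - 1)) + (N - N * δ) * (κ₁ * (1 - 2 * α)) := by
    rw [Finset.sum_congr rfl fun e _ => hd12 e]
    exact hsplit _ _ _ hv12
  -- pointwise rewrites of the centered averages
  have hptw1 : ∀ ω, ((N⁻¹ * ∑ q ∈ E, Y q.1 q.2 ω) - u₁) ^ 2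
      = (N⁻¹ * N⁻¹) * ((∑ e : EdgeIdx p, f e ω) * (∑ e : EdgeIdx p, f e ω)) := by
    intro ω
    have h1 : ∑ q ∈ E, Y q.1 q.2 ω = ∑ e : EdgeIdx p, Y e.1.1 e.1.2 ω :=
      hsum_subtype (fun q => Y q.1 q.2 ω)
    have h2 : ∑ e : EdgeIdx p, f e ω
        = ∑ e : EdgeIdx p, Y e.1.1 e.1.2 ω - ∑ e : EdgeIdx p, qv e := by
      rw [← Finset.sum_sub_distrib]
      exact Finset.sum_congr rfl fun e _ => by simp only [hf]
    rw [hu₁', h1, h2]; ring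
  have hptw2 : ∀ ω, ((2 * N)⁻¹ * ∑ q ∈ E, |Ystar q.1 q.2 ω - Y q.1 q.2 ω| - u₂) ^ 2
      = ((2 * N)⁻¹ * (2 * N)⁻¹) * ((∑ e : EdgeIdx p, g e ω) * (∑ e : EdgeIdx p, g e ω)) := by
    intro ω
    have h1 : ∑ q ∈ E, |Ystar q.1 q.2 ω - Y q.1 q.2 ω|
        = ∑ e : EdgeIdx p, |Ystar e.1.1 e.1.2 ω - Y e.1.1 e.1.2 ω| :=
      hsum_subtype (fun q => |Ystar q.1 q.2 ω - Y q.1 q.2 ω|)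
    have h2 : ∑ e : EdgeIdx p, g e ω
        = ∑ e : EdgeIdx p, |Ystar e.1.1 e.1.2 ω - Y e.1.1 e.1.2 ω| - ∑ e : EdgeIdx p, rv e := by
      rw [← Finset.sum_sub_distrib]
      exact Finset.sum_congr rfl fun e _ => by simp only [hg]
    rw [hu₂', h1, h2]; ring
  have hptw3 : ∀ ω, ((N⁻¹ * ∑ q ∈ E, Y q.1 q.2 ω) - u₁)
        * ((2 * N)⁻¹ * ∑ q ∈ E, |Ystar q.1 q.2 ω - Y q.1 q.2 ω| - u₂)
      = (N⁻¹ * (2 * N)⁻¹) * ((∑ e : EdgeIdx p, f e ω) * (∑ e : EdgeIdx p, g e ω)) := by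
    intro ω
    have h1 : ∑ q ∈ E, Y q.1 q.2 ω = ∑ e : EdgeIdx p, Y e.1.1 e.1.2 ω :=
      hsum_subtype (fun q => Y q.1 q.2 ω)
    have h1' : ∑ q ∈ E, |Ystar q.1 q.2 ω - Y q.1 q.2 ω|
        = ∑ e : EdgeIdx p, |Ystar e.1.1 e.1.2 ω - Y e.1.1 e.1.2 ω| :=
      hsum_subtype (fun q => |Ystar q.1 q.2 ω - Y q.1 q.2 ω|)
    have h2 : ∑ e : EdgeIdx p, f e ω
        = ∑ e : EdgeIdx p, Y e.1.1 e.1.2 ω - ∑ e : EdgeIdx p, qv e := by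
      rw [← Finset.sum_sub_distrib]
      exact Finset.sum_congr rfl fun e _ => by simp only [hf]
    have h2' : ∑ e : EdgeIdx p, g e ω
        = ∑ e : EdgeIdx p, |Ystar e.1.1 e.1.2 ω - Y e.1.1 e.1.2 ω| - ∑ e : EdgeIdx p, rv e := by
      rw [← Finset.sum_sub_distrib]
      exact Finset.sum_congr rfl fun e _ => by simp only [hg]
    rw [hu₁', hu₂', h1, h1', h2, h2']; ring
  refine ⟨?_, ?_, ?_⟩
  · rw [integral_congr_ae (Filter.Eventually.of_forall hptw1), integral_const_mul,
      expand_sum f f hintff hzff, hsum1]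
    exact hscal1 κ₂ κ₁
  · rw [integral_congr_ae (Filter.Eventually.of_forall hptw2), integral_const_mul,
      expand_sum g g hintgg hzgg, hsum2]
    exact hscal2 κ₂ κ₁
  · rw [integral_congr_ae (Filter.Eventually.of_forall hptw3), integral_const_mul,
      expand_sum f g hintfg hzfg, hsum12]
    exact hscal3 κ₂ κ₁
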